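/- Sampling amplification: if M provides ε-differential privacy and 0 < p < 1, then the mechanism that includes each element of the input database independently into a sample S with probability p and outputs M(S) is 2pe^ε-differentially private, i.e., P(output ∈ R on D₁) ≤ e^{2pe^ε} P(output ∈ R on D₂) for neighboring D₁, D₂. -/

import Mathlib

private lemma list_sum_map_flatMap {α β : Type*} (l : List α) (f : α → List β) (g : β → ℝ) :
    ((l.flatMap f).map g).sum = (l.map (fun a => ((f a).map g).sum)).sum := by
  induction l with
  | nil => simp
  | cons a l ih => simp [List.flatMap_cons, ih]

private lemma list_sum_map_add {α : Type*} (l : List α) (f g : α → ℝ) :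
    (l.map fun x => f x + g x).sum = (l.map f).sum + (l.map g).sum := by
  induction l with
  | nil => simp
  | cons a l ih => simp [ih]; ring

/-- Sampling amplification: if `M` (here given by its output probabilities `P`) is
`ε`-dp on databases represented as lists, and the sampled mechanism includes each
tuple independently with probability `p` and runs `M` on the sample, then the sampled
mechanism is `2 p e^ε`-differentially private. -/
theorem sampling_amplification {𝒰 ℛ : Type*}
    (P : List 𝒰 → Set ℛ → ℝ) (p ε : ℝ)
    (hp0 : 0 < p) (hp1 : p < 1) (hε : 0 < ε)
    (hnonneg : ∀ D R, 0 ≤ P D R)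
    (hprob : ∀ D R, P D R ≤ 1)
    (hdp : ∀ (l₁ l₂ : List 𝒰) (u : 𝒰) (R : Set ℛ),
      P (l₁ ++ l₂) R ≤ Real.exp ε * P (l₁ ++ u :: l₂) R ∧
      P (l₁ ++ u :: l₂) R ≤ Real.exp ε * P (l₁ ++ l₂) R)
    (samp : List 𝒰 → Set ℛ → ℝ)
    (hsamp : ∀ D R, samp D R =
      ((D.sublists).map
        (fun S => p ^ S.length * (1 - p) ^ (D.length - S.length) * P S R)).sum) :
    ∀ (l₁ l₂ : List 𝒰) (u : 𝒰) (R : Set ℛ),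
      samp (l₁ ++ u :: l₂) R ≤ Real.exp (2 * p * Real.exp ε) * samp (l₁ ++ l₂) R ∧
      samp (l₁ ++ l₂) R ≤ Real.exp (2 * p * Real.exp ε) * samp (l₁ ++ u :: l₂) R := by
  intro l₁ l₂ u R
  set n := l₁.length + l₂.length with hn
  set W : List 𝒰 → List 𝒰 → ℝ :=
    fun a b => p ^ (a.length + b.length) * (1 - p) ^ (n - (a.length + b.length)) with hW
  set S0 : ℝ :=
    (l₂.sublists.map (fun b => (l₁.sublists.map (fun a => W a b * P (a ++ b) R)).sum)).sum
    with hS0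
  set S1 : ℝ :=
    (l₂.sublists.map (fun b => (l₁.sublists.map (fun a => W a b * P (a ++ u :: b) R)).sum)).sum
    with hS1
  have hWpos : ∀ a b, 0 ≤ W a b := fun a b =>
    mul_nonneg (pow_nonneg hp0.le _) (pow_nonneg (by linarith) _)
  -- samp (l₁ ++ l₂) R = S0
  have e1 : samp (l₁ ++ l₂) R = S0 := by
    rw [hsamp, List.sublists_append, List.bind_eq_flatMap, list_sum_map_flatMap, hS0]
    refine congrArg _ (List.map_congr_left fun b _ => ?_)
    rw [List.map_map]
    refine congrArg _ (List.map_congr_left fun a _ => ?_)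
    simp [hW, hn, Nat.add_comm]
  -- samp (l₁ ++ u :: l₂) R = (1-p) * S0 + p * S1
  have e2 : samp (l₁ ++ u :: l₂) R = (1 - p) * S0 + p * S1 := by
    rw [hsamp, List.sublists_append, List.bind_eq_flatMap, list_sum_map_flatMap,
      List.sublists_cons, List.bind_eq_flatMap, list_sum_map_flatMap]
    have : ∀ b ∈ l₂.sublists,
        ((List.map (fun x =>
          (List.map (fun S => p ^ S.length * (1 - p) ^ ((l₁ ++ u :: l₂).length - S.length) * P S R)
            (List.map (fun a => a ++ x) l₁.sublists)).sum) [b, u :: b]).sum)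
        = (1 - p) * (l₁.sublists.map (fun a => W a b * P (a ++ b) R)).sum
          + p * (l₁.sublists.map (fun a => W a b * P (a ++ u :: b) R)).sum := by
      intro b hb
      have hbl : b.length ≤ l₂.length := (List.mem_sublists.mp hb).length_le
      simp only [List.map_cons, List.map_nil, List.sum_cons, List.sum_nil, add_zero,
        List.map_map]
      rw [← List.sum_map_mul_left, ← List.sum_map_mul_left]
      congr 1
      · refine congrArg _ (List.map_congr_left fun a ha => ?_)
        have hal : a.length ≤ l₁.length := (List.mem_sublists.mp ha).length_le
        have hk : a.length + b.length ≤ n := add_le_add hal hbl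
        simp only [Function.comp_apply, List.length_append, List.length_cons, hW]
        have h1 : l₁.length + (l₂.length + 1) - (a.length + b.length)
            = (n - (a.length + b.length)) + 1 := by omega
        rw [h1, pow_succ]
        ring
      · refine congrArg _ (List.map_congr_left fun a ha => ?_)
        have hal : a.length ≤ l₁.length := (List.mem_sublists.mp ha).length_le
        simp only [Function.comp_apply, List.length_append, List.length_cons, hW]
        have h1 : l₁.length + (l₂.length + 1) - (a.length + (b.length + 1))
            = n - (a.length + b.length) := by omega
        have h2 : a.length + (b.length + 1) = (a.length + b.length) + 1 := by omega
        rw [h1, h2, pow_succ]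
        ring
    rw [List.map_congr_left this, list_sum_map_add, List.sum_map_mul_left,
      List.sum_map_mul_left, hS0, hS1]
  -- nonnegativity of S0, S1
  have hS0n : 0 ≤ S0 := by
    refine List.sum_nonneg fun x hx => ?_
    obtain ⟨b, _, rfl⟩ := List.mem_map.mp hx
    refine List.sum_nonneg fun y hy => ?_
    obtain ⟨a, _, rfl⟩ := List.mem_map.mp hy
    exact mul_nonneg (hWpos a b) (hnonneg _ _)
  have hS1n : 0 ≤ S1 := by
    refine List.sum_nonneg fun x hx => ?_
    obtain ⟨b, _, rfl⟩ := List.mem_map.mp hx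
    refine List.sum_nonneg fun y hy => ?_
    obtain ⟨a, _, rfl⟩ := List.mem_map.mp hy
    exact mul_nonneg (hWpos a b) (hnonneg _ _)
  set E := Real.exp ε with hE
  have hE1 : 1 ≤ E := Real.one_le_exp hε.le
  -- termwise dp comparisons
  have e3 : S1 ≤ E * S0 := by
    rw [hS1, hS0, ← List.sum_map_mul_left]
    refine List.sum_le_sum fun b _ => ?_
    rw [← List.sum_map_mul_left]
    refine List.sum_le_sum fun a _ => ?_
    have h := (hdp a b u R).2
    nlinarith [hWpos a b]
  have e4 : S0 ≤ E * S1 := by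
    rw [hS1, hS0, ← List.sum_map_mul_left]
    refine List.sum_le_sum fun b _ => ?_
    rw [← List.sum_map_mul_left]
    refine List.sum_le_sum fun a _ => ?_
    have h := (hdp a b u R).1
    nlinarith [hWpos a b]
  set X := 2 * p * E with hX
  have hXpos : 0 ≤ X := by positivity
  have hexp1 : 1 + X ≤ Real.exp X := by linarith [Real.add_one_le_exp X]
  have hexppos : (0:ℝ) < Real.exp X := Real.exp_pos X
  constructor
  · -- direction 1
    rw [e1, e2]
    have h1 : p * S1 ≤ p * (E * S0) := mul_le_mul_of_nonneg_left e3 hp0.le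
    have hc : 1 - p + p * E ≤ Real.exp X := by nlinarith
    nlinarith [mul_le_mul_of_nonneg_right hc hS0n]
  · -- direction 2
    rw [e1, e2]
    have hEpos : (0:ℝ) < E := by linarith
    have key2 : E ≤ Real.exp X * ((1 - p) * E + p) := by
      have hq1 : (1:ℝ) ≤ (1 - p) * E + p := by nlinarith
      have := mul_le_mul_of_nonneg_right hexp1 (by linarith : (0:ℝ) ≤ (1 - p) * E + p)
      nlinarith
    rw [← mul_le_mul_iff_right₀ hEpos]
    have h1 : Real.exp X * p * S0 ≤ Real.exp X * p * (E * S1) :=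
      mul_le_mul_of_nonneg_left e4 (by positivity)
    have h2 : E * S0 ≤ Real.exp X * ((1 - p) * E + p) * S0 :=
      mul_le_mul_of_nonneg_right key2 hS0n
    nlinarith
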